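/- arXiv:2510.12220 — 2 statements merged into one kernel-verified Lean document; each statement's English description precedes it below -/
import Mathlib

section
/- Let E₁, …, E_L and F be real inner product spaces, H : (∏_{l=1}^L E_l) → F a map, a, b ∈ ∏_l E_l, and define the hybrid points w_l ∈ ∏_k E_k for 0 ≤ l ≤ L by (w_l)_k = a_k for k ≤ l and (w_l)_k = b_k for k > l (so w_0 = b, w_L = a). Assume: (i) coordinatewise coercivity: there are η_l ≥ 0 such that for any u, v ∈ ∏_k E_k differing only in coordinate l, ‖H(u) − H(v)‖² ≥ η_l ‖u_l − v_l‖²; and (ii) the increments Δ_l = H(w_l) − H(w_{l−1}) satisfy ⟨Δ_l, Δ_k⟩ ≥ −ρ ‖Δ_l‖ ‖Δ_k‖ for all l ≠ k, with 0 ≤ ρ. Then ‖H(a) − H(b)‖² ≥ (1 − ρ(L − 1)) ∑_{l=1}^L η_l ‖a_l − b_l‖². -/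
/-- The hybrid point `w_l`: its first `l` coordinates are taken from `a` and the
remaining ones from `b` (so `hybrid a b 0 = b` and `hybrid a b L = a`). -/
def hybrid {L : ℕ} {E : Fin L → Type*} (a b : ∀ l, E l) (l : ℕ) : ∀ k, E k :=
  fun k => if (k : ℕ) < l then a k else b k

/-- Hybrid-coordinate lower bound: if `H` is coordinatewise coercive with constants
`η_l ≥ 0`, and the increments `Δ_l = H(w_l) − H(w_{l−1})` along the hybrid sequence from
`b` to `a` satisfy `⟨Δ_l, Δ_k⟩ ≥ −ρ ‖Δ_l‖ ‖Δ_k‖` for `l ≠ k` with `ρ ≥ 0`, then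
`‖H(a) − H(b)‖² ≥ (1 − ρ(L − 1)) ∑_l η_l ‖a_l − b_l‖²`. -/
theorem hybrid_coercivity_lower_bound (L : ℕ) (E : Fin L → Type*)
    [∀ l, NormedAddCommGroup (E l)] [∀ l, InnerProductSpace ℝ (E l)]
    {F : Type*} [NormedAddCommGroup F] [InnerProductSpace ℝ F]
    (H : (∀ l, E l) → F) (a b : ∀ l, E l)
    (η : Fin L → ℝ) (hη : ∀ l, 0 ≤ η l) (ρ : ℝ) (hρ : 0 ≤ ρ)
    (hcoer : ∀ (l : Fin L) (u v : ∀ k, E k), (∀ k : Fin L, k ≠ l → u k = v k) →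
      ‖H u - H v‖ ^ 2 ≥ η l * ‖u l - v l‖ ^ 2)
    (hcross : ∀ l k : Fin L, l ≠ k →
      (inner ℝ (H (hybrid a b ((l : ℕ) + 1)) - H (hybrid a b (l : ℕ)))
          (H (hybrid a b ((k : ℕ) + 1)) - H (hybrid a b (k : ℕ))) : ℝ) ≥
        -(ρ * ‖H (hybrid a b ((l : ℕ) + 1)) - H (hybrid a b (l : ℕ))‖ *
            ‖H (hybrid a b ((k : ℕ) + 1)) - H (hybrid a b (k : ℕ))‖)) :
    ‖H a - H b‖ ^ 2 ≥ (1 - ρ * ((L : ℝ) - 1)) * ∑ l, η l * ‖a l - b l‖ ^ 2 := by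
  set Δ : Fin L → F := fun l => H (hybrid a b ((l : ℕ) + 1)) - H (hybrid a b (l : ℕ)) with hΔ
  have hTnn : (0 : ℝ) ≤ ∑ l, η l * ‖a l - b l‖ ^ 2 :=
    Finset.sum_nonneg fun l _ => mul_nonneg (hη l) (sq_nonneg _)
  rcases le_or_gt (1 - ρ * ((L : ℝ) - 1)) 0 with hc | hc
  · calc (1 - ρ * ((L : ℝ) - 1)) * ∑ l, η l * ‖a l - b l‖ ^ 2 ≤ 0 :=
          mul_nonpos_of_nonpos_of_nonneg hc hTnn
      _ ≤ ‖H a - H b‖ ^ 2 := sq_nonneg _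
  -- telescoping
  have htel : ∑ l, Δ l = H a - H b := by
    have hL : hybrid a b L = a := by
      funext k; simp [hybrid, k.isLt]
    have h0 : hybrid a b 0 = b := by
      funext k; simp [hybrid]
    calc ∑ l : Fin L, Δ l
        = ∑ i ∈ Finset.range L, (H (hybrid a b (i + 1)) - H (hybrid a b i)) :=
          Fin.sum_univ_eq_sum_range (fun i => H (hybrid a b (i + 1)) - H (hybrid a b i)) L
      _ = H (hybrid a b L) - H (hybrid a b 0) :=
          Finset.sum_range_sub (fun n => H (hybrid a b n)) L
      _ = H a - H b := by rw [hL, h0]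
  -- per-coordinate coercivity
  have hSl : ∀ l : Fin L, ‖Δ l‖ ^ 2 ≥ η l * ‖a l - b l‖ ^ 2 := by
    intro l
    have hdiff : ∀ k : Fin L, k ≠ l → hybrid a b ((l : ℕ) + 1) k = hybrid a b (l : ℕ) k := by
      intro k hk
      have hv : (k : ℕ) ≠ (l : ℕ) := fun h => hk (Fin.ext h)
      simp only [hybrid]
      rcases lt_or_gt_of_ne hv with h | h
      · rw [if_pos (h.trans (Nat.lt_succ_self _)), if_pos h]
      · rw [if_neg (by omega), if_neg (by omega)]
    have := hcoer l _ _ hdiff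
    have e1 : hybrid a b ((l : ℕ) + 1) l = a l := by
      simp only [hybrid, if_pos (Nat.lt_succ_self _)]
    have e2 : hybrid a b (l : ℕ) l = b l := by
      simp only [hybrid, if_neg (lt_irrefl _)]
    rw [e1, e2] at this
    exact this
  set S : ℝ := ∑ l, ‖Δ l‖ ^ 2 with hSdef
  have hTS : ∑ l, η l * ‖a l - b l‖ ^ 2 ≤ S :=
    Finset.sum_le_sum fun l _ => hSl l
  -- expand the norm of the sum
  have hexp : ‖H a - H b‖ ^ 2 = ∑ l, ∑ k, (inner ℝ (Δ l) (Δ k) : ℝ) := by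
    rw [← htel, ← real_inner_self_eq_norm_sq, sum_inner]
    exact Finset.sum_congr rfl fun l _ => inner_sum _ _ _
  -- lower bound the double sum
  have hmain : ∑ l, ∑ k, (inner ℝ (Δ l) (Δ k) : ℝ) ≥ S - ρ * ((L : ℝ) - 1) * S := by
    have step1 : ∀ l : Fin L, ∑ k, (inner ℝ (Δ l) (Δ k) : ℝ)
        ≥ ‖Δ l‖ ^ 2 - ρ * (((L : ℝ) - 1) * ‖Δ l‖ ^ 2 + (S - ‖Δ l‖ ^ 2)) / 2 := by
      intro l
      have hsplit : ∑ k, (inner ℝ (Δ l) (Δ k) : ℝ)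
          = (inner ℝ (Δ l) (Δ l) : ℝ) + ∑ k ∈ Finset.univ.erase l, (inner ℝ (Δ l) (Δ k) : ℝ) :=
        (Finset.add_sum_erase _ _ (Finset.mem_univ l)).symm
      rw [hsplit, real_inner_self_eq_norm_sq]
      have hbd : ∑ k ∈ Finset.univ.erase l, (inner ℝ (Δ l) (Δ k) : ℝ)
          ≥ ∑ k ∈ Finset.univ.erase l, (-(ρ * (‖Δ l‖ ^ 2 + ‖Δ k‖ ^ 2) / 2)) := by
        apply Finset.sum_le_sum
        intro k hk
        have hkl : l ≠ k := fun h => (Finset.mem_erase.mp hk).1 h.symm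
        refine le_trans ?_ (hcross l k hkl)
        have hAM : ‖Δ l‖ * ‖Δ k‖ ≤ (‖Δ l‖ ^ 2 + ‖Δ k‖ ^ 2) / 2 := by
          nlinarith [sq_nonneg (‖Δ l‖ - ‖Δ k‖)]
        have h2 : ρ * ‖Δ l‖ * ‖Δ k‖ ≤ ρ * ((‖Δ l‖ ^ 2 + ‖Δ k‖ ^ 2) / 2) := by
          rw [mul_assoc]; exact mul_le_mul_of_nonneg_left hAM hρ
        linarith
      have hsum : ∑ k ∈ Finset.univ.erase l, (-(ρ * (‖Δ l‖ ^ 2 + ‖Δ k‖ ^ 2) / 2))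
          = -(ρ * (((L : ℝ) - 1) * ‖Δ l‖ ^ 2 + (S - ‖Δ l‖ ^ 2)) / 2) := by
        rw [Finset.sum_neg_distrib]
        congr 1
        rw [← Finset.sum_div, ← Finset.mul_sum, Finset.sum_add_distrib, Finset.sum_const,
          Finset.card_erase_of_mem (Finset.mem_univ l), Finset.card_univ, Fintype.card_fin,
          nsmul_eq_mul, Finset.sum_erase_eq_sub (Finset.mem_univ l), ← hSdef,
          Nat.cast_sub l.pos, Nat.cast_one]
      rw [hsum] at hbd
      linarith
    calc ∑ l, ∑ k, (inner ℝ (Δ l) (Δ k) : ℝ)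
        ≥ ∑ l, (‖Δ l‖ ^ 2 - ρ * (((L : ℝ) - 1) * ‖Δ l‖ ^ 2 + (S - ‖Δ l‖ ^ 2)) / 2) :=
          Finset.sum_le_sum fun l _ => step1 l
      _ = S - ρ * ((L : ℝ) - 1) * S := by
          have hform : ∀ l : Fin L,
              ‖Δ l‖ ^ 2 - ρ * (((L : ℝ) - 1) * ‖Δ l‖ ^ 2 + (S - ‖Δ l‖ ^ 2)) / 2
              = (1 - ρ * ((L : ℝ) - 2) / 2) * ‖Δ l‖ ^ 2 - (ρ / 2) * S := fun l => by ring
          rw [Finset.sum_congr rfl fun l _ => hform l, Finset.sum_sub_distrib,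
            ← Finset.mul_sum, ← hSdef, Finset.sum_const, Finset.card_univ, Fintype.card_fin,
            nsmul_eq_mul]
          ring
  have hfin : ‖H a - H b‖ ^ 2 ≥ (1 - ρ * ((L : ℝ) - 1)) * S := by
    have h2 : (1 - ρ * ((L : ℝ) - 1)) * S = S - ρ * ((L : ℝ) - 1) * S := by ring
    rw [hexp, h2]; exact hmain
  calc ‖H a - H b‖ ^ 2 ≥ (1 - ρ * ((L : ℝ) - 1)) * S := hfin
    _ ≥ (1 - ρ * ((L : ℝ) - 1)) * ∑ l, η l * ‖a l - b l‖ ^ 2 :=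
      mul_le_mul_of_nonneg_left hTS hc.le
end

section
/- In the setting of the preceding hybrid-coordinate lower bound, suppose additionally E_l = ℝ^{d_l}, that A_l are real d_l×d_l matrices, t ≥ 0, and a_l = exp(−t A_l) u_l and b_l = exp(−t A_l) v_l for vectors u_l, v_l ∈ ℝ^{d_l}. Then ‖H(a) − H(b)‖² ≥ (1 − ρ(L − 1)) · e^{−2t·max_l ‖A_l‖} · ∑_{l=1}^L η_l ‖u_l − v_l‖². -/
open Matrix
open scoped Matrix.Norms.L2Operator

lemma aux_norm_one_le (n : ℕ) : ‖(1 : Matrix (Fin n) (Fin n) ℝ)‖ ≤ 1 := by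
  rw [Matrix.cstar_norm_def, _root_.map_one]
  exact ContinuousLinearMap.norm_id_le

lemma aux_norm_exp_le (n : ℕ) (M : Matrix (Fin n) (Fin n) ℝ) :
    ‖NormedSpace.exp M‖ ≤ Real.exp ‖M‖ := by
  rw [NormedSpace.exp_eq_tsum (𝕂 := ℝ)]
  have hsum := NormedSpace.norm_expSeries_summable' (𝕂 := ℝ) M
  have hterm : ∀ k : ℕ, ‖((k.factorial : ℝ))⁻¹ • M ^ k‖ ≤ ‖M‖ ^ k / (k.factorial : ℝ) := by
    intro k
    rw [norm_smul, norm_inv, Real.norm_natCast, div_eq_inv_mul]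
    refine mul_le_mul_of_nonneg_left ?_ (by positivity)
    rcases Nat.eq_zero_or_pos k with hk | hk
    · subst hk; simpa using aux_norm_one_le n
    · exact norm_pow_le' M hk
  calc ‖∑' k : ℕ, ((k.factorial : ℝ))⁻¹ • M ^ k‖ ≤ ∑' k : ℕ, ‖((k.factorial : ℝ))⁻¹ • M ^ k‖ :=
        norm_tsum_le_tsum_norm hsum
    _ ≤ ∑' k : ℕ, ‖M‖ ^ k / (k.factorial : ℝ) :=
        Summable.tsum_le_tsum hterm hsum (Real.summable_pow_div_factorial ‖M‖)
    _ = Real.exp ‖M‖ := by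
        rw [Real.exp_eq_exp_ℝ, NormedSpace.exp_eq_tsum_div]

lemma aux_exp_mulVec_lower (n : ℕ) (X : Matrix (Fin n) (Fin n) ℝ)
    (w : EuclideanSpace ℝ (Fin n)) :
    Real.exp (-‖X‖) * ‖w‖ ≤
      ‖(EuclideanSpace.equiv (Fin n) ℝ).symm (NormedSpace.exp X *ᵥ w)‖ := by
  set y : EuclideanSpace ℝ (Fin n) :=
    (EuclideanSpace.equiv (Fin n) ℝ).symm (NormedSpace.exp X *ᵥ w) with hy
  have hinv : NormedSpace.exp (-X) * NormedSpace.exp X = 1 := by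
    rw [← Matrix.exp_add_of_commute (-X) X (Commute.refl X).neg_left, neg_add_cancel,
      NormedSpace.exp_zero]
  have hw : (w : EuclideanSpace ℝ (Fin n)) =
      (EuclideanSpace.equiv (Fin n) ℝ).symm (NormedSpace.exp (-X) *ᵥ y) := by
    show w = (EuclideanSpace.equiv (Fin n) ℝ).symm
      (NormedSpace.exp (-X) *ᵥ (NormedSpace.exp X *ᵥ w))
    rw [Matrix.mulVec_mulVec, hinv, Matrix.one_mulVec]
    rfl
  have h1 : ‖w‖ ≤ Real.exp ‖X‖ * ‖y‖ := by
    calc ‖w‖ = ‖(EuclideanSpace.equiv (Fin n) ℝ).symm (NormedSpace.exp (-X) *ᵥ y)‖ := by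
          rw [← hw]
      _ ≤ ‖NormedSpace.exp (-X)‖ * ‖y‖ := Matrix.l2_opNorm_mulVec _ y
      _ ≤ Real.exp ‖X‖ * ‖y‖ := by
          refine mul_le_mul_of_nonneg_right ?_ (norm_nonneg _)
          simpa [norm_neg] using aux_norm_exp_le n (-X)
  rw [Real.exp_neg, inv_mul_le_iff₀ (Real.exp_pos _)]
  exact h1

lemma aux_hybrid_inner_lower (L : ℕ) (d : Fin L → ℕ)
    {F : Type*} [NormedAddCommGroup F] [InnerProductSpace ℝ F]
    (H : (∀ l, EuclideanSpace ℝ (Fin (d l))) → F)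
    (a b : ∀ l, EuclideanSpace ℝ (Fin (d l)))
    (ρ : ℝ) (hρ : 0 ≤ ρ)
    (hcross : ∀ l k : Fin L, l ≠ k →
      (inner ℝ (H (hybrid a b ((l : ℕ) + 1)) - H (hybrid a b (l : ℕ)))
          (H (hybrid a b ((k : ℕ) + 1)) - H (hybrid a b (k : ℕ))) : ℝ) ≥
        -(ρ * ‖H (hybrid a b ((l : ℕ) + 1)) - H (hybrid a b (l : ℕ))‖ *
            ‖H (hybrid a b ((k : ℕ) + 1)) - H (hybrid a b (k : ℕ))‖)) :
    ‖H a - H b‖ ^ 2 ≥ (1 - ρ * ((L : ℝ) - 1)) *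
      ∑ l : Fin L, ‖H (hybrid a b ((l : ℕ) + 1)) - H (hybrid a b (l : ℕ))‖ ^ 2 := by
  classical
  set Δ : Fin L → F := fun l => H (hybrid a b ((l : ℕ) + 1)) - H (hybrid a b (l : ℕ)) with hΔ
  set S : ℝ := ∑ l : Fin L, ‖Δ l‖ ^ 2 with hS
  have hSnn : 0 ≤ S := Finset.sum_nonneg fun l _ => by positivity
  have htel : H a - H b = ∑ l : Fin L, Δ l := by
    have h1 : ∑ l : Fin L, Δ l
        = ∑ i ∈ Finset.range L, (H (hybrid a b (i + 1)) - H (hybrid a b i)) :=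
      Fin.sum_univ_eq_sum_range (fun i => H (hybrid a b (i + 1)) - H (hybrid a b i)) L
    rw [h1, Finset.sum_range_sub (fun i => H (hybrid a b i))]
    have hL : hybrid a b L = a := by
      funext k; simp [hybrid, k.isLt]
    have h0 : hybrid a b 0 = b := by funext k; simp [hybrid]
    rw [hL, h0]
  have expand : ‖H a - H b‖ ^ 2 =
      S + ∑ l : Fin L, ∑ k ∈ Finset.univ.erase l, (inner ℝ (Δ l) (Δ k) : ℝ) := by
    rw [htel, ← real_inner_self_eq_norm_sq, sum_inner, ← Finset.sum_add_distrib]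
    refine Finset.sum_congr rfl fun l _ => ?_
    rw [inner_sum, ← Finset.add_sum_erase _ _ (Finset.mem_univ l),
      real_inner_self_eq_norm_sq]
  have hT : ∑ l : Fin L, ∑ k ∈ Finset.univ.erase l, (‖Δ l‖ * ‖Δ k‖) ≤ ((L:ℝ) - 1) * S := by
    have step1 : ∑ l : Fin L, ∑ k ∈ Finset.univ.erase l, (‖Δ l‖ * ‖Δ k‖)
        ≤ ∑ l : Fin L, ∑ k ∈ Finset.univ.erase l, (‖Δ l‖ ^ 2 / 2 + ‖Δ k‖ ^ 2 / 2) := by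
      refine Finset.sum_le_sum fun l _ => Finset.sum_le_sum fun k _ => ?_
      nlinarith [sq_nonneg (‖Δ l‖ - ‖Δ k‖)]
    refine step1.trans_eq ?_
    have hinner : ∀ l : Fin L,
        ∑ k ∈ Finset.univ.erase l, (‖Δ l‖ ^ 2 / 2 + ‖Δ k‖ ^ 2 / 2)
        = ((L:ℝ) - 1) * (‖Δ l‖ ^ 2 / 2) + (S / 2 - ‖Δ l‖ ^ 2 / 2) := by
      intro l
      rw [Finset.sum_add_distrib, Finset.sum_const, Finset.sum_erase_eq_sub (Finset.mem_univ l),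
        nsmul_eq_mul, Finset.card_erase_of_mem (Finset.mem_univ l), Finset.card_univ,
        Fintype.card_fin, Nat.cast_sub l.pos, Nat.cast_one, hS, ← Finset.sum_div]
    rw [Finset.sum_congr rfl fun l _ => hinner l, Finset.sum_add_distrib, ← Finset.mul_sum,
      Finset.sum_sub_distrib, Finset.sum_const, Finset.card_univ, Fintype.card_fin,
      nsmul_eq_mul]
    have : ∑ l : Fin L, ‖Δ l‖ ^ 2 / 2 = S / 2 := by rw [hS, ← Finset.sum_div]
    rw [this]
    ring
  have hC : ∑ l : Fin L, ∑ k ∈ Finset.univ.erase l, (inner ℝ (Δ l) (Δ k) : ℝ)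
      ≥ -(ρ * (((L:ℝ) - 1) * S)) := by
    have step : ∑ l : Fin L, ∑ k ∈ Finset.univ.erase l, (inner ℝ (Δ l) (Δ k) : ℝ)
        ≥ ∑ l : Fin L, ∑ k ∈ Finset.univ.erase l, -(ρ * ‖Δ l‖ * ‖Δ k‖) := by
      refine Finset.sum_le_sum fun l _ => Finset.sum_le_sum fun k hk => ?_
      exact hcross l k (Finset.ne_of_mem_erase hk).symm
    refine le_trans ?_ step
    have : ∑ l : Fin L, ∑ k ∈ Finset.univ.erase l, -(ρ * ‖Δ l‖ * ‖Δ k‖)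
        = -(ρ * ∑ l : Fin L, ∑ k ∈ Finset.univ.erase l, (‖Δ l‖ * ‖Δ k‖)) := by
      rw [Finset.mul_sum, ← Finset.sum_neg_distrib]
      refine Finset.sum_congr rfl fun l _ => ?_
      rw [Finset.mul_sum, ← Finset.sum_neg_distrib]
      exact Finset.sum_congr rfl fun k _ => by ring
    rw [this]
    exact neg_le_neg (mul_le_mul_of_nonneg_left hT hρ)
  calc (1 - ρ * ((L : ℝ) - 1)) * S = S - ρ * (((L:ℝ) - 1) * S) := by ring
    _ ≤ S + ∑ l : Fin L, ∑ k ∈ Finset.univ.erase l, (inner ℝ (Δ l) (Δ k) : ℝ) := by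
        have := hC; linarith
    _ = ‖H a - H b‖ ^ 2 := expand.symm

/-- Hybrid-coordinate lower bound through Koopman flows: with `a_l = exp(−t A_l) *ᵥ u_l`
and `b_l = exp(−t A_l) *ᵥ v_l`, coordinatewise coercivity of `H` with constants `η_l ≥ 0`,
and increments along the hybrid sequence having pairwise inner products
`≥ −ρ` times the product of their norms (`ρ ≥ 0`), one has
`‖H(a) − H(b)‖² ≥ (1 − ρ(L − 1)) e^{−2t·max_l ‖A_l‖} ∑_l η_l ‖u_l − v_l‖²`. -/
theorem hybrid_coercivity_koopman_lower_bound (L : ℕ) (d : Fin L → ℕ)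
    {F : Type*} [NormedAddCommGroup F] [InnerProductSpace ℝ F]
    (H : (∀ l, EuclideanSpace ℝ (Fin (d l))) → F)
    (A : ∀ l, Matrix (Fin (d l)) (Fin (d l)) ℝ) (t : ℝ) (ht : 0 ≤ t)
    (u v a b : ∀ l, EuclideanSpace ℝ (Fin (d l)))
    (ha : ∀ l, a l =
      (EuclideanSpace.equiv (Fin (d l)) ℝ).symm ((NormedSpace.exp (-t • A l)) *ᵥ u l))
    (hb : ∀ l, b l =
      (EuclideanSpace.equiv (Fin (d l)) ℝ).symm ((NormedSpace.exp (-t • A l)) *ᵥ v l))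
    (η : Fin L → ℝ) (hη : ∀ l, 0 ≤ η l) (ρ : ℝ) (hρ : 0 ≤ ρ)
    (hcoer : ∀ (l : Fin L) (u' v' : ∀ k, EuclideanSpace ℝ (Fin (d k))),
      (∀ k : Fin L, k ≠ l → u' k = v' k) →
      ‖H u' - H v'‖ ^ 2 ≥ η l * ‖u' l - v' l‖ ^ 2)
    (hcross : ∀ l k : Fin L, l ≠ k →
      (inner ℝ (H (hybrid a b ((l : ℕ) + 1)) - H (hybrid a b (l : ℕ)))
          (H (hybrid a b ((k : ℕ) + 1)) - H (hybrid a b (k : ℕ))) : ℝ) ≥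
        -(ρ * ‖H (hybrid a b ((l : ℕ) + 1)) - H (hybrid a b (l : ℕ))‖ *
            ‖H (hybrid a b ((k : ℕ) + 1)) - H (hybrid a b (k : ℕ))‖)) :
    ‖H a - H b‖ ^ 2 ≥
      (1 - ρ * ((L : ℝ) - 1)) * Real.exp (-2 * t * ⨆ l, ‖A l‖) *
        ∑ l, η l * ‖u l - v l‖ ^ 2 := by
  classical
  set M : ℝ := ⨆ l, ‖A l‖ with hM
  have hsum_nn : (0:ℝ) ≤ ∑ l, η l * ‖u l - v l‖ ^ 2 :=
    Finset.sum_nonneg fun l _ => mul_nonneg (hη l) (by positivity)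
  by_cases hc : 1 - ρ * ((L : ℝ) - 1) ≤ 0
  · have hle : (1 - ρ * ((L : ℝ) - 1)) * Real.exp (-2 * t * M) *
        ∑ l, η l * ‖u l - v l‖ ^ 2 ≤ 0 :=
      mul_nonpos_of_nonpos_of_nonneg
        (mul_nonpos_of_nonpos_of_nonneg hc (Real.exp_pos _).le) hsum_nn
    exact le_trans hle (by positivity)
  push_neg at hc
  have key := aux_hybrid_inner_lower L d H a b ρ hρ hcross
  -- coercivity at each coordinate
  have hco : ∀ l : Fin L,
      η l * ‖a l - b l‖ ^ 2 ≤
        ‖H (hybrid a b ((l : ℕ) + 1)) - H (hybrid a b (l : ℕ))‖ ^ 2 := by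
    intro l
    have hoff : ∀ k : Fin L, k ≠ l → hybrid a b ((l : ℕ) + 1) k = hybrid a b (l : ℕ) k := by
      intro k hk
      have hne : (k : ℕ) ≠ (l : ℕ) := fun h => hk (Fin.ext h)
      simp only [hybrid]
      split_ifs with h1 h2 <;> first | rfl | omega
    have := hcoer l (hybrid a b ((l : ℕ) + 1)) (hybrid a b (l : ℕ)) hoff
    have h1 : hybrid a b ((l : ℕ) + 1) l = a l := by
      simp [hybrid]
    have h2 : hybrid a b (l : ℕ) l = b l := by
      simp [hybrid]
    rw [h1, h2] at this
    exact this
  -- exponential lower bound at each coordinate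
  have hAle : ∀ l : Fin L, ‖A l‖ ≤ M :=
    fun l => le_ciSup (f := fun l => ‖A l‖) (Set.Finite.bddAbove (Set.finite_range _)) l
  have hab : ∀ l : Fin L,
      Real.exp (-2 * t * M) * ‖u l - v l‖ ^ 2 ≤ ‖a l - b l‖ ^ 2 := by
    intro l
    have hdiff : a l - b l = (EuclideanSpace.equiv (Fin (d l)) ℝ).symm
        (NormedSpace.exp (-t • A l) *ᵥ (u l - v l)) := by
      rw [ha l, hb l, ← map_sub, Matrix.mulVec_sub]
    have hXnorm : ‖(-t) • A l‖ = t * ‖A l‖ := by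
      rw [norm_smul, Real.norm_eq_abs, abs_neg, abs_of_nonneg ht]
    have hlow : Real.exp (-(t * M)) * ‖u l - v l‖ ≤ ‖a l - b l‖ := by
      rw [hdiff]
      refine le_trans ?_ (aux_exp_mulVec_lower (d l) (-t • A l) (u l - v l))
      rw [hXnorm]
      refine mul_le_mul_of_nonneg_right ?_ (norm_nonneg _)
      exact Real.exp_le_exp.mpr (by nlinarith [mul_le_mul_of_nonneg_left (hAle l) ht])
    have h0 : (0:ℝ) ≤ Real.exp (-(t * M)) * ‖u l - v l‖ := by positivity
    have hsq := mul_self_le_mul_self h0 hlow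
    calc Real.exp (-2 * t * M) * ‖u l - v l‖ ^ 2
        = (Real.exp (-(t * M)) * ‖u l - v l‖) ^ 2 := by
          rw [mul_pow, ← Real.exp_nat_mul]
          ring_nf
      _ ≤ ‖a l - b l‖ ^ 2 := by
          rw [pow_two, pow_two]; exact hsq
  -- assemble
  have hchain : ∑ l, η l * (Real.exp (-2 * t * M) * ‖u l - v l‖ ^ 2)
      ≤ ∑ l : Fin L, ‖H (hybrid a b ((l : ℕ) + 1)) - H (hybrid a b (l : ℕ))‖ ^ 2 := by
    refine Finset.sum_le_sum fun l _ => ?_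
    exact le_trans (mul_le_mul_of_nonneg_left (hab l) (hη l)) (hco l)
  have hrw : ∑ l, η l * (Real.exp (-2 * t * M) * ‖u l - v l‖ ^ 2)
      = Real.exp (-2 * t * M) * ∑ l, η l * ‖u l - v l‖ ^ 2 := by
    rw [Finset.mul_sum]
    exact Finset.sum_congr rfl fun l _ => by ring
  calc (1 - ρ * ((L : ℝ) - 1)) * Real.exp (-2 * t * M) * ∑ l, η l * ‖u l - v l‖ ^ 2
      = (1 - ρ * ((L : ℝ) - 1)) *
          (Real.exp (-2 * t * M) * ∑ l, η l * ‖u l - v l‖ ^ 2) := by ring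
    _ = (1 - ρ * ((L : ℝ) - 1)) *
          ∑ l, η l * (Real.exp (-2 * t * M) * ‖u l - v l‖ ^ 2) := by rw [hrw]
    _ ≤ (1 - ρ * ((L : ℝ) - 1)) *
          ∑ l : Fin L, ‖H (hybrid a b ((l : ℕ) + 1)) - H (hybrid a b (l : ℕ))‖ ^ 2 :=
        mul_le_mul_of_nonneg_left hchain hc.le
    _ ≤ ‖H a - H b‖ ^ 2 := key
end
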